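/- Let 1 < β_1 ≤ β_2 ≤ … ≤ β_d be fixed real numbers. For 1 ≤ i ≤ d and t ≥ 0 define λ_i(t) := #{1 ≤ j ≤ d : log β_j > log β_i + t} + #{1 ≤ j ≤ d : β_j ≤ β_i} · (log β_i)/(log β_i + t) + Σ_{j : β_i < β_j ≤ β_i e^t} (log β_j)/(log β_i + t). Then for each i, the function t ↦ λ_i(t) is non-increasing on [0,∞). -/

import Mathlib

open scoped Classical

lemma aux_clamp_anti (a b : ℝ) (ha : 0 < a) :
    AntitoneOn (fun t => max a (min b (a + t)) / (a + t)) (Set.Ici (0 : ℝ)) := by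
  intro s hs t ht hst
  simp only [Set.mem_Ici] at hs ht
  have has : 0 < a + s := by linarith
  have hat : 0 < a + t := by linarith
  rw [div_le_div_iff₀ hat has]
  rcases le_total b a with hba | hab
  · rw [min_eq_left (by linarith), min_eq_left (by linarith), max_eq_left hba]
    nlinarith
  · rcases le_total b (a + s) with h1 | h1
    · rw [min_eq_left (by linarith), min_eq_left h1, max_eq_right hab]
      nlinarith
    · rcases le_total b (a + t) with h2 | h2
      · rw [min_eq_left h2, min_eq_right h1, max_eq_right hab, max_eq_right (by linarith)]
        nlinarith
      · rw [min_eq_right h2, min_eq_right h1, max_eq_right (by linarith),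
          max_eq_right (by linarith)]
        nlinarith

/-- **Monotonicity of `λ_i`.** For fixed `1 < β_1 ≤ ⋯ ≤ β_d` and each `i`, the function
`t ↦ #{j : log β_j > log β_i + t} + #{j : β_j ≤ β_i} · log β_i/(log β_i + t)
   + Σ_{j : β_i < β_j ≤ β_i e^t} log β_j/(log β_i + t)`
is non-increasing on `[0,∞)`. -/
theorem lam_antitoneOn
    (d : ℕ) (β : Fin d → ℝ) (hβ : ∀ i, 1 < β i) (hmono : Monotone β) (i : Fin d) :
    AntitoneOn (fun t : ℝ =>
      ((Finset.univ.filter fun j : Fin d => Real.log (β i) + t < Real.log (β j)).card : ℝ)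
      + ((Finset.univ.filter fun j : Fin d => β j ≤ β i).card : ℝ) *
          (Real.log (β i) / (Real.log (β i) + t))
      + ∑ j ∈ Finset.univ.filter (fun j : Fin d => β i < β j ∧ β j ≤ β i * Real.exp t),
          Real.log (β j) / (Real.log (β i) + t)) (Set.Ici (0 : ℝ)) := by
  set a := Real.log (β i) with ha_def
  have hβi : 0 < β i := lt_trans one_pos (hβ i)
  have ha : 0 < a := Real.log_pos (hβ i)
  have key : ∀ t ∈ Set.Ici (0 : ℝ),
      ((Finset.univ.filter fun j : Fin d => a + t < Real.log (β j)).card : ℝ)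
      + ((Finset.univ.filter fun j : Fin d => β j ≤ β i).card : ℝ) * (a / (a + t))
      + (∑ j ∈ Finset.univ.filter (fun j : Fin d => β i < β j ∧ β j ≤ β i * Real.exp t),
          Real.log (β j) / (a + t))
      = ∑ j : Fin d, max a (min (Real.log (β j)) (a + t)) / (a + t) := by
    intro t ht
    simp only [Set.mem_Ici] at ht
    have hat : 0 < a + t := by linarith
    have h1 : ((Finset.univ.filter fun j : Fin d => a + t < Real.log (β j)).card : ℝ)
        = ∑ j ∈ Finset.univ.filter (fun j : Fin d => a + t < Real.log (β j)), (1 : ℝ) := by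
      simp
    have h2 : ((Finset.univ.filter fun j : Fin d => β j ≤ β i).card : ℝ) * (a / (a + t))
        = ∑ j ∈ Finset.univ.filter (fun j : Fin d => β j ≤ β i), a / (a + t) := by
      rw [Finset.sum_const, nsmul_eq_mul]
    rw [h1, h2, Finset.sum_filter, Finset.sum_filter, Finset.sum_filter,
      ← Finset.sum_add_distrib, ← Finset.sum_add_distrib]
    refine Finset.sum_congr rfl fun j _ => ?_
    have hβj : 0 < β j := lt_trans one_pos (hβ j)
    rcases lt_or_ge (a + t) (Real.log (β j)) with hc1 | hc1
    · have hba : a < Real.log (β j) := by linarith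
      have hc2 : ¬ β j ≤ β i := by
        rw [not_le, ← Real.log_lt_log_iff hβi hβj]; exact hba
      have hc3 : ¬ (β i < β j ∧ β j ≤ β i * Real.exp t) := by
        rintro ⟨-, h⟩
        have : Real.log (β j) ≤ Real.log (β i * Real.exp t) :=
          Real.log_le_log hβj h
        rw [Real.log_mul (ne_of_gt hβi) (Real.exp_pos t).ne', Real.log_exp] at this
        linarith
      rw [if_pos hc1, if_neg hc2, if_neg hc3, min_eq_right hc1.le,
        max_eq_right (by linarith), div_self hat.ne']
      ring
    · rcases le_or_gt (β j) (β i) with hc2 | hc2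
      · have hlb : Real.log (β j) ≤ a := Real.log_le_log hβj hc2
        have hc3 : ¬ (β i < β j ∧ β j ≤ β i * Real.exp t) := by
          rintro ⟨h, -⟩; exact absurd h (not_lt.2 hc2)
        rw [if_neg (not_lt.2 hc1), if_pos hc2, if_neg hc3, min_eq_left (by linarith),
          max_eq_left hlb]
        ring
      · have hlb : a < Real.log (β j) := Real.log_lt_log hβi hc2
        have hle : β j ≤ β i * Real.exp t := by
          have hlogeq : Real.log (β i * Real.exp t) = a + t := by
            rw [Real.log_mul (ne_of_gt hβi) (Real.exp_pos t).ne', Real.log_exp]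
          rw [← Real.log_le_log_iff hβj (by positivity), hlogeq]
          exact hc1
        rw [if_neg (not_lt.2 hc1), if_neg (not_le.2 hc2), if_pos ⟨hc2, hle⟩,
          min_eq_left hc1, max_eq_right hlb.le]
        ring
  intro s hs t ht hst
  simp only []
  rw [key t ht, key s hs]
  exact Finset.sum_le_sum fun j _ =>
    aux_clamp_anti a (Real.log (β j)) ha hs ht hst
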